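/- The initial monomial of [T] for a straight tableau T of row-convex shape D, with respect to the default diagonal term order, occurs with coefficient ±1 and equals ∏_l x_{(w'_T)_l, c_l}, where w'_T is the reverse column word of T and c_l is the column of the l-th cell in column-reading order. Consequently the modified column word of a straight tableau can be read from the initial monomial of [T]. -/

import Mathlib

open scoped BigOperators

/-- A cell `(row, column)` of a diagram. -/
abbrev Cell := ℕ × ℕ

/-- A shape is row-convex if its rows have no gaps. -/
def RowConvex (D : Finset Cell) : Prop :=
  ∀ r i j k : ℕ, (r, i) ∈ D → (r, k) ∈ D → i ≤ j → j ≤ k → (r, j) ∈ D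

/-- Rows strictly increase left to right (negative-letter convention). -/
def RowStandard (D : Finset Cell) (T : Cell → ℕ) : Prop :=
  ∀ r i j : ℕ, (r, i) ∈ D → (r, j) ∈ D → i < j → T (r, i) < T (r, j)

/-- A straight tableau (negative-letter case). -/
def Straight (D : Finset Cell) (T : Cell → ℕ) : Prop :=
  RowStandard D T ∧
    ∀ i j k : ℕ, (i, k) ∈ D → (j, k) ∈ D → i < j → T (j, k) < T (i, k) →
      1 ≤ k ∧ (i, k - 1) ∈ D ∧ T (j, k) < T (i, k - 1)

/-- Sorted list of column indices of the cells of `D` in row `r`. -/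
def rowColsList (D : Finset Cell) (r : ℕ) : List ℕ :=
  ((D.filter (fun c => c.1 = r)).val.map Prod.snd).sort (· ≤ ·)

/-- The bracket (determinant of the minor of the generic matrix `(x_{l,p})`)
corresponding to row `r` of the tableau `T`. -/
noncomputable def rowBracket (D : Finset Cell) (T : Cell → ℕ) (r : ℕ) :
    MvPolynomial Cell ℤ :=
  Matrix.det (Matrix.of fun s t : Fin (rowColsList D r).length =>
    MvPolynomial.X (T (r, (rowColsList D r).get s), (rowColsList D r).get t))

/-- `[T]`: the product over the rows of `D` of the row brackets. -/
noncomputable def bracket (D : Finset Cell) (T : Cell → ℕ) : MvPolynomial Cell ℤ :=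
  ∏ r ∈ D.image Prod.fst, rowBracket D T r

/-- Multiset of entries of `T` in column `k` of `D`. -/
def colEntries (D : Finset Cell) (T : Cell → ℕ) (k : ℕ) : Multiset ℕ :=
  (D.filter (fun c => c.2 = k)).val.map T

/-- The modified column word: entries of each column in weakly decreasing
order, columns read left to right. -/
def modColWord (D : Finset Cell) (T : Cell → ℕ) : List ℕ :=
  (List.range (D.sup Prod.snd + 1)).flatMap fun k =>
    ((colEntries D T k).sort (· ≤ ·)).reverse

/-- The column word: entries read bottom to top within each column, columns
left to right. -/
def colWord (D : Finset Cell) (T : Cell → ℕ) : List ℕ :=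
  (List.range (D.sup Prod.snd + 1)).flatMap fun k =>
    (List.range (D.sup Prod.fst + 1)).reverse.filterMap fun i =>
      if (i, k) ∈ D then some (T (i, k)) else none

/-- Strict lexicographic order on words. -/
def lexLt (u v : List ℕ) : Prop := List.Lex (· < ·) u v

/-- Weak lexicographic order on words. -/
def lexLe (u v : List ℕ) : Prop := u = v ∨ List.Lex (· < ·) u v

/-- `varGt v w`: the variable `x_v` is greater than `x_w` in the default
diagonal order: strictly earlier column, or same column and strictly larger
row index (letter). -/
def varGt (v w : Cell) : Prop := v.2 < w.2 ∨ (v.2 = w.2 ∧ w.1 < v.1)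

/-- The default diagonal term order on monomials: `monLt M N` iff the greatest
variable occurring to different powers in `M` and `N` divides `N` to a higher
power. -/
def monLt (M N : Cell →₀ ℕ) : Prop :=
  ∃ v : Cell, M v < N v ∧ ∀ w : Cell, varGt w v → M w = N w

/-- The diagonal monomial of a tableau: the product over the cells `(i, c)` of
`D` of the variables `x_{T(i,c), c}`. -/
noncomputable def diagMon (D : Finset Cell) (T : Cell → ℕ) : Cell →₀ ℕ :=
  ∑ c ∈ D, Finsupp.single (T c, c.2) 1

/-- `m` is the initial (smallest) monomial of `p` in the default diagonal term
order. -/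
def IsInitMon (p : MvPolynomial Cell ℤ) (m : Cell →₀ ℕ) : Prop :=
  m ∈ p.support ∧ ∀ m' ∈ p.support, m' = m ∨ monLt m m'

namespace Aux

/-- Key embedding: greater variable ↔ smaller key. -/
def key (v : Cell) : ℕ ×ₗ ℕᵒᵈ := toLex (v.2, OrderDual.toDual v.1)

lemma varGt_iff_key (v w : Cell) : varGt v w ↔ key v < key w := by
  unfold varGt key
  rw [Prod.Lex.lt_iff]
  simp

lemma key_inj : Function.Injective key := by
  rintro ⟨a, b⟩ ⟨c, d⟩ h
  unfold key at h
  have h1 := congrArg (fun x => (ofLex x).1) h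
  have h2 := congrArg (fun x => (ofLex x).2) h
  simp at h1 h2
  exact Prod.ext h2 h1

def MonLe (M N : Cell →₀ ℕ) : Prop := M = N ∨ monLt M N

lemma monLt_irrefl (M : Cell →₀ ℕ) : ¬ monLt M M := by
  rintro ⟨v, h, -⟩; exact lt_irrefl _ h

lemma monLt_add_right {M N : Cell →₀ ℕ} (P : Cell →₀ ℕ) (h : monLt M N) :
    monLt (M + P) (N + P) := by
  obtain ⟨v, hv, hw⟩ := h
  refine ⟨v, ?_, fun w hgt => ?_⟩
  · simp only [Finsupp.add_apply]; omega
  · simp only [Finsupp.add_apply, hw w hgt]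

lemma monLt_add_of_le {M N P Q : Cell →₀ ℕ} (h : monLt M N) (h' : MonLe P Q) :
    monLt (M + P) (N + Q) := by
  rcases h' with rfl | h'
  · exact monLt_add_right P h
  obtain ⟨v, hv, hvw⟩ := h
  obtain ⟨u, hu, huw⟩ := h'
  rcases lt_trichotomy (key v) (key u) with hk | hk | hk
  · -- v is the greater variable
    refine ⟨v, ?_, fun w hgt => ?_⟩
    · have : P v = Q v := huw v ((varGt_iff_key v u).2 hk)
      simp only [Finsupp.add_apply]; omega
    · have h1 := hvw w hgt
      have h2 : varGt w u := by
        rw [varGt_iff_key] at hgt ⊢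
        exact lt_trans hgt hk
      have h3 := huw w h2
      simp only [Finsupp.add_apply, h1, h3]
  · have : v = u := key_inj hk
    subst this
    refine ⟨v, ?_, fun w hgt => ?_⟩
    · simp only [Finsupp.add_apply]; omega
    · simp only [Finsupp.add_apply, hvw w hgt, huw w hgt]
  · -- u is the greater variable
    refine ⟨u, ?_, fun w hgt => ?_⟩
    · have : M u = N u := hvw u ((varGt_iff_key u v).2 hk)
      simp only [Finsupp.add_apply]; omega
    · have h1 := huw w hgt
      have h2 : varGt w v := by
        rw [varGt_iff_key] at hgt ⊢
        exact lt_trans hgt hk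
      have h3 := hvw w h2
      simp only [Finsupp.add_apply, h1, h3]

lemma monLe_add {M N P Q : Cell →₀ ℕ} (h : MonLe M N) (h' : MonLe P Q) :
    MonLe (M + P) (N + Q) := by
  rcases h with rfl | h
  · rcases h' with rfl | h'
    · exact Or.inl rfl
    · refine Or.inr ?_
      have := monLt_add_of_le h' (Or.inl rfl : MonLe M M)
      simpa [add_comm] using this
  · exact Or.inr (monLt_add_of_le h h')

lemma eq_of_add_eq {m n a b : Cell →₀ ℕ} (hab : a + b = m + n)
    (ha : MonLe m a) (hb : MonLe n b) : a = m ∧ b = n := by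
  rcases ha with rfl | ha
  · refine ⟨rfl, ?_⟩
    have := add_left_cancel hab
    exact this
  · exfalso
    have : monLt (m + n) (a + b) := monLt_add_of_le ha hb
    rw [hab] at this
    exact monLt_irrefl _ this

/-- `p` has `m` as strictly-smallest monomial with coefficient `±1`. -/
def StrictMin (p : MvPolynomial Cell ℤ) (m : Cell →₀ ℕ) : Prop :=
  (MvPolynomial.coeff m p = 1 ∨ MvPolynomial.coeff m p = -1) ∧
    ∀ m' ∈ p.support, m' = m ∨ monLt m m'

lemma StrictMin.mem_support {p m} (h : StrictMin p m) : m ∈ p.support := by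
  rw [MvPolynomial.mem_support_iff]
  rcases h.1 with h1 | h1 <;> rw [h1] <;> norm_num

lemma StrictMin.monLe {p m} (h : StrictMin p m) {m'} (hm' : m' ∈ p.support) :
    MonLe m m' := by
  rcases h.2 m' hm' with rfl | h'
  · exact Or.inl rfl
  · exact Or.inr h'

lemma StrictMin.mul {p q : MvPolynomial Cell ℤ} {m n : Cell →₀ ℕ}
    (hp : StrictMin p m) (hq : StrictMin q n) : StrictMin (p * q) (m + n) := by
  have key : MvPolynomial.coeff (m + n) (p * q) =
      MvPolynomial.coeff m p * MvPolynomial.coeff n q := by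
    rw [MvPolynomial.coeff_mul]
    refine Finset.sum_eq_single_of_mem (m, n) (Finset.HasAntidiagonal.mem_antidiagonal.2 rfl) ?_
    rintro ⟨a, b⟩ hab hne
    by_contra hc
    have ha : a ∈ p.support := by
      rw [MvPolynomial.mem_support_iff]; intro h0; apply hc; simp [h0]
    have hb : b ∈ q.support := by
      rw [MvPolynomial.mem_support_iff]; intro h0; apply hc; simp [h0]
    have hsum : a + b = m + n := Finset.HasAntidiagonal.mem_antidiagonal.1 hab
    obtain ⟨h1, h2⟩ := eq_of_add_eq hsum (hp.monLe ha) (hq.monLe hb)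
    exact hne (by simp [h1, h2])
  constructor
  · rw [key]
    rcases hp.1 with h1 | h1 <;> rcases hq.1 with h2 | h2 <;> rw [h1, h2] <;> norm_num
  · intro m' hm'
    have := MvPolynomial.support_mul p q hm'
    rw [Finset.mem_add] at this
    obtain ⟨a, ha, b, hb, hab⟩ := this
    have : MonLe (m + n) m' := by
      rw [← hab]
      exact monLe_add (hp.monLe ha) (hq.monLe hb)
    rcases this with h | h
    · exact Or.inl h.symm
    · exact Or.inr h

lemma StrictMin.prod {ι : Type*} (s : Finset ι) (p : ι → MvPolynomial Cell ℤ)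
    (m : ι → Cell →₀ ℕ) (h : ∀ r ∈ s, StrictMin (p r) (m r)) :
    StrictMin (∏ r ∈ s, p r) (∑ r ∈ s, m r) := by
  classical
  induction s using Finset.induction with
  | empty =>
    constructor
    · simp [MvPolynomial.coeff_one]
    · intro m' hm'
      rw [Finset.prod_empty, MvPolynomial.mem_support_iff, MvPolynomial.coeff_one] at hm'
      simp only [Finset.sum_empty]
      by_cases h0 : (0 : Cell →₀ ℕ) = m'
      · exact Or.inl h0.symm
      · simp [h0] at hm'
  | @insert a s ha ih =>
    rw [Finset.prod_insert ha, Finset.sum_insert ha]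
    exact (h a (Finset.mem_insert_self a s)).mul
      (ih fun r hr => h r (Finset.mem_insert_of_mem hr))

end Aux

namespace Aux
open MvPolynomial

lemma prod_X_eq {α : Type*} (s : Finset α) (f : α → Cell) :
    (∏ i ∈ s, (MvPolynomial.X (f i) : MvPolynomial Cell ℤ)) =
      MvPolynomial.monomial (∑ i ∈ s, Finsupp.single (f i) 1) 1 := by
  classical
  induction s using Finset.induction with
  | empty => simp
  | @insert a s ha ih =>
    rw [Finset.prod_insert ha, Finset.sum_insert ha, ih, X, monomial_mul, one_mul]

/-- The monomial of the permutation `σ` in the determinant. -/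
noncomputable def permMon (n : ℕ) (a c : Fin n → ℕ) (σ : Equiv.Perm (Fin n)) : Cell →₀ ℕ :=
  ∑ t : Fin n, Finsupp.single (a (σ t), c t) 1

lemma permMon_apply (n : ℕ) (a c : Fin n → ℕ) (σ : Equiv.Perm (Fin n)) (v : Cell) :
    permMon n a c σ v = ∑ t : Fin n, (if ((a (σ t), c t) : Cell) = v then 1 else 0) := by
  rw [permMon, Finsupp.finset_sum_apply]
  congr 1; ext t
  rw [Finsupp.single_apply]

lemma permMon_lt (n : ℕ) (a c : Fin n → ℕ) (ha : StrictMono a) (hc : StrictMono c)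
    (σ : Equiv.Perm (Fin n)) (hσ : σ ≠ 1) :
    monLt (permMon n a c 1) (permMon n a c σ) := by
  classical
  -- the minimal non-fixed point
  set S : Finset (Fin n) := Finset.univ.filter (fun t => σ t ≠ t) with hS
  have hSne : S.Nonempty := by
    by_contra h
    apply hσ
    refine Equiv.ext fun t => ?_
    have : t ∉ S := fun ht => h ⟨t, ht⟩
    simp only [hS, Finset.mem_filter, Finset.mem_univ, true_and, not_not] at this
    simpa using this
  set t0 := S.min' hSne with ht0
  have ht0S : t0 ∈ S := S.min'_mem hSne
  have ht0ne : σ t0 ≠ t0 := by simpa [hS] using ht0S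
  have hfix : ∀ t : Fin n, t < t0 → σ t = t := by
    intro t ht
    by_contra h
    have : t ∈ S := by simpa [hS] using h
    exact absurd (S.min'_le t this) (not_le.2 ht)
  have hgt : t0 < σ t0 := by
    rcases lt_trichotomy (σ t0) t0 with h | h | h
    · exfalso
      have h1 : σ (σ t0) = σ t0 := hfix _ h
      exact absurd (σ.injective h1) ht0ne
    · exact absurd h ht0ne
    · exact h
  refine ⟨(a (σ t0), c t0), ?_, ?_⟩
  · -- strict inequality at the witness
    have h1 : permMon n a c 1 (a (σ t0), c t0) = 0 := by
      rw [permMon_apply]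
      refine Finset.sum_eq_zero fun t _ => ?_
      rw [if_neg]
      intro h
      have h2 : c t = c t0 := congrArg Prod.snd h
      have h3 : t = t0 := hc.injective h2
      have h4 : a ((1 : Equiv.Perm (Fin n)) t) = a (σ t0) := congrArg Prod.fst h
      simp only [Equiv.Perm.one_apply] at h4
      rw [h3] at h4
      exact ht0ne (ha.injective h4).symm
    have h2 : (1 : ℕ) ≤ permMon n a c σ (a (σ t0), c t0) := by
      rw [permMon_apply]
      have := Finset.single_le_sum
        (f := fun t : Fin n => (if ((a (σ t), c t) : Cell) = (a (σ t0), c t0) then 1 else 0))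
        (fun i _ => by positivity) (Finset.mem_univ t0)
      simpa using this
    omega
  · -- equality at greater variables
    rintro ⟨b, p⟩ hw
    rw [permMon_apply, permMon_apply]
    refine Finset.sum_congr rfl fun t _ => ?_
    by_cases hcp : c t = p
    · rcases hw with hp | ⟨hp, hb⟩
      · -- p < c t0 ⇒ t < t0 ⇒ σ t = t
        simp only at hp
        have htlt : t < t0 := by
          have : c t < c t0 := by omega
          exact hc.lt_iff_lt.1 this
        simp only [Equiv.Perm.one_apply]
        rw [hfix t htlt]
        exact if_congr Iff.rfl rfl rfl
      · -- p = c t0 and b > a (σ t0): both sides are 0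
        simp only at hp hb
        have ht : t = t0 := hc.injective (hcp.trans hp)
        have h6 : a t0 < a (σ t0) := ha hgt
        rw [if_neg, if_neg]
        · intro h
          have h5 : a (σ t) = b := congrArg Prod.fst h
          rw [ht] at h5
          omega
        · intro h
          have h1 : a ((1 : Equiv.Perm (Fin n)) t) = b := congrArg Prod.fst h
          simp only [Equiv.Perm.one_apply] at h1
          rw [ht] at h1
          omega
    · rw [if_neg, if_neg]
      · intro h; exact hcp (congrArg Prod.snd h)
      · intro h; exact hcp (congrArg Prod.snd h)

lemma permMon_eq_one (n : ℕ) (a c : Fin n → ℕ) (ha : StrictMono a) (hc : StrictMono c)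
    (σ : Equiv.Perm (Fin n)) (h : permMon n a c σ = permMon n a c 1) : σ = 1 := by
  classical
  refine Equiv.ext fun t => ?_
  simp only [Equiv.Perm.one_apply]
  by_contra hne
  have h1 : (1 : ℕ) ≤ permMon n a c σ (a (σ t), c t) := by
    rw [permMon_apply]
    have := Finset.single_le_sum
      (f := fun t' : Fin n => (if ((a (σ t'), c t') : Cell) = (a (σ t), c t) then 1 else 0))
      (fun i _ => by positivity) (Finset.mem_univ t)
    simpa using this
  have h2 : permMon n a c 1 (a (σ t), c t) = 0 := by
    rw [permMon_apply]
    refine Finset.sum_eq_zero fun t' _ => ?_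
    rw [if_neg]
    intro heq
    have hcc : c t' = c t := congrArg Prod.snd heq
    have ht' : t' = t := hc.injective hcc
    rw [ht'] at heq
    have h4 : a ((1 : Equiv.Perm (Fin n)) t) = a (σ t) := congrArg Prod.fst heq
    simp only [Equiv.Perm.one_apply] at h4
    exact hne (ha.injective h4).symm
  rw [h] at h1
  omega

lemma det_strictMin (n : ℕ) (a c : Fin n → ℕ) (ha : StrictMono a) (hc : StrictMono c) :
    StrictMin (Matrix.det (Matrix.of fun s t : Fin n => (MvPolynomial.X (a s, c t) : MvPolynomial Cell ℤ)))
      (permMon n a c 1) := by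
  classical
  have hdet : Matrix.det (Matrix.of fun s t : Fin n => (MvPolynomial.X (a s, c t) : MvPolynomial Cell ℤ)) =
      ∑ σ : Equiv.Perm (Fin n), (Equiv.Perm.sign σ : ℤ) • (monomial (permMon n a c σ) (1 : ℤ)) := by
    rw [Matrix.det_apply]
    refine Finset.sum_congr rfl fun σ _ => ?_
    simp only [Matrix.of_apply]
    rw [prod_X_eq Finset.univ (fun t : Fin n => ((a (σ t), c t) : Cell)), Units.smul_def]
    rfl
  have hcoeff : ∀ m : Cell →₀ ℕ,
      MvPolynomial.coeff m (Matrix.det (Matrix.of fun s t : Fin n => (MvPolynomial.X (a s, c t) : MvPolynomial Cell ℤ))) =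
        ∑ σ : Equiv.Perm (Fin n), (if permMon n a c σ = m then (Equiv.Perm.sign σ : ℤ) else 0) := by
    intro m
    rw [hdet, MvPolynomial.coeff_sum]
    refine Finset.sum_congr rfl fun σ _ => ?_
    rw [MvPolynomial.coeff_smul, MvPolynomial.coeff_monomial]
    by_cases h : permMon n a c σ = m <;> simp [h]
  constructor
  · left
    rw [hcoeff]
    rw [Finset.sum_eq_single_of_mem (1 : Equiv.Perm (Fin n)) (Finset.mem_univ _)]
    · simp
    · intro σ _ hσ
      rw [if_neg]
      intro h
      exact hσ (permMon_eq_one n a c ha hc σ h)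
  · intro m' hm'
    rw [MvPolynomial.mem_support_iff, hcoeff] at hm'
    have : ∃ σ : Equiv.Perm (Fin n), permMon n a c σ = m' := by
      by_contra h
      push_neg at h
      apply hm'
      refine Finset.sum_eq_zero fun σ _ => ?_
      rw [if_neg (h σ)]
    obtain ⟨σ, rfl⟩ := this
    by_cases hσ : σ = 1
    · subst hσ; exact Or.inl rfl
    · exact Or.inr (permMon_lt n a c ha hc σ hσ)

end Aux

namespace Aux

lemma sum_get_map {β : Type*} [AddCommMonoid β] (l : List ℕ) (f : ℕ → β) :
    ∑ t : Fin l.length, f (l.get t) = (l.map f).sum := by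
  induction l with
  | nil => simp
  | cons x xs ih => simp [Fin.sum_univ_succ, ih]

lemma mem_rowColsList (D : Finset Cell) (r : ℕ) {x : ℕ} (hx : x ∈ rowColsList D r) :
    ((r, x) : Cell) ∈ D := by
  rw [rowColsList, Multiset.mem_sort, Multiset.mem_map] at hx
  obtain ⟨c, hc, rfl⟩ := hx
  have h1 := Finset.mem_filter.1 (Finset.mem_def.2 hc)
  have h2 : ((r, c.2) : Cell) = c := by rw [← h1.2]
  rw [h2]; exact h1.1

lemma get_strictMono (D : Finset Cell) (r : ℕ) : StrictMono (rowColsList D r).get := by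
  have hnd : (rowColsList D r).Nodup := by
    have h1 : ((Finset.filter (fun c => c.1 = r) D).val.map Prod.snd).Nodup := by
      refine Multiset.Nodup.map_on ?_ (Finset.filter (fun c => c.1 = r) D).nodup
      intro x hx y hy hxy
      have hx1 := (Finset.mem_filter.1 (Finset.mem_def.2 hx)).2
      have hy1 := (Finset.mem_filter.1 (Finset.mem_def.2 hy)).2
      exact Prod.ext (hx1.trans hy1.symm) hxy
    rw [rowColsList, ← Multiset.coe_nodup, Multiset.sort_eq]
    exact h1
  have hsort : (rowColsList D r).Pairwise (· ≤ ·) := by apply Multiset.pairwise_sort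
  have hpair : (rowColsList D r).Pairwise (· < ·) :=
    (List.Pairwise.and hsort hnd).imp fun h => lt_of_le_of_ne h.1 h.2
  intro i j hij
  exact List.pairwise_iff_get.1 hpair i j hij

lemma rowBracket_strictMin (D : Finset Cell) (T : Cell → ℕ) (r : ℕ)
    (hT : RowStandard D T) :
    StrictMin (rowBracket D T r)
      (permMon (rowColsList D r).length
        (fun s => T (r, (rowColsList D r).get s)) (rowColsList D r).get 1) := by
  have hc := get_strictMono D r
  have ha : StrictMono (fun s : Fin (rowColsList D r).length =>
      T (r, (rowColsList D r).get s)) := by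
    intro i j hij
    exact hT r _ _ (mem_rowColsList D r (List.get_mem _ i))
      (mem_rowColsList D r (List.get_mem _ j)) (hc hij)
  exact det_strictMin _ _ _ ha hc

lemma diagMon_eq (D : Finset Cell) (T : Cell → ℕ) :
    diagMon D T = ∑ r ∈ D.image Prod.fst,
      permMon (rowColsList D r).length
        (fun s => T (r, (rowColsList D r).get s)) (rowColsList D r).get 1 := by
  classical
  rw [diagMon,
    ← Finset.sum_fiberwise_of_maps_to (g := Prod.fst)
      (fun x hx => Finset.mem_image_of_mem _ hx)
      (fun c : Cell => Finsupp.single ((T c, c.2) : Cell) (1 : ℕ))]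
  refine Finset.sum_congr rfl fun r _ => ?_
  have step1 : ∑ c ∈ Finset.filter (fun c : Cell => c.1 = r) D,
        Finsupp.single ((T c, c.2) : Cell) (1 : ℕ)
      = ∑ c ∈ Finset.filter (fun c : Cell => c.1 = r) D,
        (fun x : ℕ => Finsupp.single ((T (r, x), x) : Cell) (1 : ℕ)) c.2 := by
    refine Finset.sum_congr rfl fun c hc => ?_
    have h1 := (Finset.mem_filter.1 hc).2
    have h2 : ((r, c.2) : Cell) = c := by rw [← h1]
    have h3 : T c = T (r, c.2) := by rw [h2]
    rw [h3]
  rw [step1]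
  set f : ℕ → (Cell →₀ ℕ) := fun x => Finsupp.single ((T (r, x), x) : Cell) (1 : ℕ) with hf
  have step2 : ∑ c ∈ Finset.filter (fun c : Cell => c.1 = r) D, f c.2
      = ((rowColsList D r).map f).sum := by
    rw [Finset.sum_eq_multiset_sum]
    have : (Finset.filter (fun c : Cell => c.1 = r) D).val.map (fun c => f c.2)
        = ((Finset.filter (fun c : Cell => c.1 = r) D).val.map Prod.snd).map f := by
      rw [Multiset.map_map]; rfl
    rw [this]
    have h3 : ((Finset.filter (fun c : Cell => c.1 = r) D).val.map Prod.snd)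
        = ((rowColsList D r : List ℕ) : Multiset ℕ) := by
      rw [rowColsList, Multiset.sort_eq]
    rw [h3, Multiset.map_coe, Multiset.sum_coe]
  rw [step2, ← sum_get_map]
  rw [permMon]
  rfl

end Aux


/-- For a straight tableau `T` of row-convex shape `D`, the initial monomial of
`[T]` in the default diagonal term order is `∏_l x_{(w'_T)_l, c_l}`, i.e. the
diagonal monomial `∏_{(i,c) ∈ D} x_{T(i,c), c}` (grouping the reverse column
word by columns), and it occurs with coefficient `±1`.  In particular the
(modified) column word of a straight tableau can be read off from the initial
monomial of `[T]`. -/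
theorem initial_monomial_of_straight
    (D : Finset Cell) (hD : RowConvex D) (T : Cell → ℕ)
    (hT : Straight D T) :
    IsInitMon (bracket D T) (diagMon D T) ∧
      (MvPolynomial.coeff (diagMon D T) (bracket D T) = 1 ∨
        MvPolynomial.coeff (diagMon D T) (bracket D T) = -1) := by
  classical
  have hmin : Aux.StrictMin (bracket D T) (diagMon D T) := by
    rw [bracket, Aux.diagMon_eq D T]
    exact Aux.StrictMin.prod _ _ _ fun r _ => Aux.rowBracket_strictMin D T r hT.1
  exact ⟨⟨hmin.mem_support, hmin.2⟩, hmin.1⟩
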